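/- Let W₀, W₁, W₂ be complex Hilbert spaces with real structures and L₀₁ ⊆ W₀ ⊕ (−W₁), L₁₂ ⊆ W₁ ⊕ (−W₂) Lagrangians, L = L₀₁ ⊕ L₁₂. Then σ has closed range when restricted to L if and only if P_L(Ū) and P_{L̄}(U) are closed, where U = δ(W₁), δ(w) = (0,w,w,0), and P_L, P_{L̄} are orthogonal projections onto L and L̄ respectively. -/

import Mathlib

noncomputable section

/-- A real structure on a complex inner product space: an anti-unitary involution `v ↦ v̄`. -/
structure RealStructure (W : Type*) [NormedAddCommGroup W] [InnerProductSpace ℂ W] where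
  conj : W → W
  map_add : ∀ v w : W, conj (v + w) = conj v + conj w
  map_smul : ∀ (c : ℂ) (v : W), conj (c • v) = (starRingEnd ℂ) c • conj v
  invol : ∀ v : W, conj (conj v) = v
  inner_conj : ∀ v w : W, (inner ℂ (conj v) (conj w) : ℂ) = (starRingEnd ℂ) (inner ℂ v w : ℂ)

/-- The real structure of `A ⊕ (−B)`. -/
def pairConj {A B : Type*} [NormedAddCommGroup A] [InnerProductSpace ℂ A]
    [NormedAddCommGroup B] [InnerProductSpace ℂ B]
    (rA : RealStructure A) (rB : RealStructure B) : A × B → A × B :=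
  fun p => (rA.conj p.1, -rB.conj p.2)

/-- The Hermitian inner product of `A ⊕ B`. -/
def pairInner {A B : Type*} [NormedAddCommGroup A] [InnerProductSpace ℂ A]
    [NormedAddCommGroup B] [InnerProductSpace ℂ B] (x y : A × B) : ℂ :=
  (inner ℂ x.1 y.1 : ℂ) + (inner ℂ x.2 y.2 : ℂ)

/-- A Lagrangian `L ⊆ A ⊕ (−B)`. -/
def IsLagrangianPair {A B : Type*} [NormedAddCommGroup A] [InnerProductSpace ℂ A]
    [NormedAddCommGroup B] [InnerProductSpace ℂ B]
    (rA : RealStructure A) (rB : RealStructure B) (L : Submodule ℂ (A × B)) : Prop :=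
  pairConj rA rB '' (L : Set (A × B)) = {y : A × B | ∀ x ∈ L, pairInner x y = 0}

variable {W₀ W₁ W₂ : Type*}
  [NormedAddCommGroup W₀] [InnerProductSpace ℂ W₀] [CompleteSpace W₀]
  [NormedAddCommGroup W₁] [InnerProductSpace ℂ W₁] [CompleteSpace W₁]
  [NormedAddCommGroup W₂] [InnerProductSpace ℂ W₂] [CompleteSpace W₂]

/-- The Hermitian inner product of `W = W₀ ⊕ (−W₁) ⊕ W₁ ⊕ (−W₂)`. -/
def innerE (x y : (W₀ × W₁) × (W₁ × W₂)) : ℂ :=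
  pairInner x.1 y.1 + pairInner x.2 y.2

/-- The set of orthogonal projections onto the (closed) subspace `C` of elements of `S`. -/
def projSet (C S : Set ((W₀ × W₁) × (W₁ × W₂))) : Set ((W₀ × W₁) × (W₁ × W₂)) :=
  {p | p ∈ C ∧ ∃ u ∈ S, ∀ x ∈ C, innerE (u - p) x = 0}


/-- The conjugation of `W = W₀ ⊕ (−W₁) ⊕ W₁ ⊕ (−W₂)`. -/
def conjE (r₀ : RealStructure W₀) (r₁ : RealStructure W₁) (r₂ : RealStructure W₂) :
    (W₀ × W₁) × (W₁ × W₂) → (W₀ × W₁) × (W₁ × W₂) :=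
  fun x => (pairConj r₀ r₁ x.1, pairConj r₁ r₂ x.2)


open ContinuousLinearMap in
/-- Closed range theorem, one direction. -/
theorem isClosed_range_adjoint_of_isClosed_range
    {E F : Type*} [NormedAddCommGroup E] [InnerProductSpace ℂ E] [CompleteSpace E]
    [NormedAddCommGroup F] [InnerProductSpace ℂ F] [CompleteSpace F]
    (T : E →L[ℂ] F) (h : IsClosed (Set.range T)) :
    IsClosed (Set.range (ContinuousLinearMap.adjoint T)) := by
  set R : Submodule ℂ F := LinearMap.range (T : E →ₗ[ℂ] F) with hR
  have hRset : (R : Set F) = Set.range T := by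
    ext y; simp [hR, LinearMap.mem_range, Set.mem_range]
  haveI : CompleteSpace R := by
    rw [← hRset] at h; exact h.completeSpace_coe
  have hsurj : Function.Surjective
      (T.codRestrict R fun x => LinearMap.mem_range_self (T : E →ₗ[ℂ] F) x) := by
    rintro ⟨y, x, rfl⟩; exact ⟨x, rfl⟩
  obtain ⟨C, hC0, hC⟩ := (T.codRestrict R _).exists_preimage_norm_le hsurj
  set S : R →L[ℂ] E := (ContinuousLinearMap.adjoint T).comp R.subtypeL with hS
  have hSapp : ∀ y : R, S y = ContinuousLinearMap.adjoint T (y : F) := fun y => rfl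
  have hb : ∀ y : R, ‖y‖ ≤ C * ‖S y‖ := by
    intro y
    obtain ⟨x, hx, hxn⟩ := hC y
    rcases eq_or_lt_of_le (norm_nonneg y) with h0 | h0
    · rw [← h0]; positivity
    have key : ‖y‖ * ‖y‖ ≤ ‖y‖ * (C * ‖S y‖) := by
      have hTx : T x = (y : F) := congrArg Subtype.val hx
      have h1 : (‖y‖ : ℝ) * ‖y‖ = RCLike.re (inner (𝕜 := ℂ) (T x) (y : F)) := by
        rw [hTx, inner_self_eq_norm_mul_norm]
        rfl
      have h2 : RCLike.re (inner (𝕜 := ℂ) (T x) (y : F))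
          = RCLike.re (inner (𝕜 := ℂ) x (S y)) := by
        rw [hSapp, ContinuousLinearMap.adjoint_inner_right]
      have h3 : RCLike.re (inner (𝕜 := ℂ) x (S y)) ≤ ‖x‖ * ‖S y‖ := re_inner_le_norm _ _
      have h4 : ‖x‖ * ‖S y‖ ≤ (C * ‖y‖) * ‖S y‖ :=
        mul_le_mul_of_nonneg_right hxn (norm_nonneg _)
      rw [h1, h2]
      calc RCLike.re (inner (𝕜 := ℂ) x (S y)) ≤ ‖x‖ * ‖S y‖ := h3
        _ ≤ (C * ‖y‖) * ‖S y‖ := h4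
        _ = ‖y‖ * (C * ‖S y‖) := by ring
    exact le_of_mul_le_mul_left key h0
  have hanti : AntilipschitzWith C.toNNReal S := by
    apply S.antilipschitz_of_bound
    intro y
    rw [Real.coe_toNNReal C hC0.le]
    exact hb y
  have hclosed : IsClosed (Set.range S) := hanti.isClosed_range S.uniformContinuous
  have hker : ∀ z ∈ Rᗮ, ContinuousLinearMap.adjoint T z = 0 := by
    intro z hz
    have : ∀ u : E, inner (𝕜 := ℂ) u (ContinuousLinearMap.adjoint T z) = 0 := by
      intro u
      rw [ContinuousLinearMap.adjoint_inner_right]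
      exact (Submodule.mem_orthogonal R z).1 hz (T u) (LinearMap.mem_range_self _ u)
    have := this (ContinuousLinearMap.adjoint T z)
    rwa [inner_self_eq_zero] at this
  have hrange : Set.range (ContinuousLinearMap.adjoint T) = Set.range S := by
    apply Set.Subset.antisymm
    · rintro _ ⟨y, rfl⟩
      refine ⟨R.orthogonalProjectionOnto y, ?_⟩
      rw [hSapp]
      have hdec : (y : F) - (R.orthogonalProjectionOnto y : F) ∈ Rᗮ :=
        Submodule.sub_starProjection_mem_orthogonal (K := R) y
      have h5 := hker _ hdec
      rw [map_sub, sub_eq_zero] at h5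
      exact h5.symm
    · rintro _ ⟨y, rfl⟩
      exact ⟨(y : F), (hSapp y).symm⟩
  rwa [hrange]

open ContinuousLinearMap in
theorem isClosed_range_iff_isClosed_range_adjoint
    {E F : Type*} [NormedAddCommGroup E] [InnerProductSpace ℂ E] [CompleteSpace E]
    [NormedAddCommGroup F] [InnerProductSpace ℂ F] [CompleteSpace F]
    (T : E →L[ℂ] F) :
    IsClosed (Set.range T) ↔ IsClosed (Set.range (ContinuousLinearMap.adjoint T)) := by
  constructor
  · exact isClosed_range_adjoint_of_isClosed_range T
  · intro h
    have := isClosed_range_adjoint_of_isClosed_range (ContinuousLinearMap.adjoint T) h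
    rwa [ContinuousLinearMap.adjoint_adjoint] at this

/-- An additive, norm-preserving involution is a homeomorphism. -/
def involHomeo {X : Type*} [NormedAddCommGroup X] (f : X → X)
    (hadd : ∀ a b, f (a + b) = f a + f b) (hinv : ∀ a, f (f a) = a)
    (hnorm : ∀ a, ‖f a‖ = ‖a‖) : X ≃ₜ X := by
  have hcont : Continuous f := by
    have : Isometry f := AddMonoidHomClass.isometry_of_norm (AddMonoidHom.mk' f hadd) hnorm
    exact this.continuous
  exact { toFun := f, invFun := f, left_inv := hinv, right_inv := hinv,
          continuous_toFun := hcont, continuous_invFun := hcont }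
namespace RealStructure

variable {A : Type*} [NormedAddCommGroup A] [InnerProductSpace ℂ A]

theorem map_zero' (r : RealStructure A) : r.conj 0 = 0 := by
  have h := r.map_smul 0 0
  simpa using h

theorem map_neg' (r : RealStructure A) (v : A) : r.conj (-v) = - r.conj v := by
  have h := r.map_smul (-1) v
  simpa using h

theorem map_sub' (r : RealStructure A) (v w : A) : r.conj (v - w) = r.conj v - r.conj w := by
  rw [sub_eq_add_neg, r.map_add, r.map_neg', sub_eq_add_neg]

theorem norm_conj (r : RealStructure A) (v : A) : ‖r.conj v‖ = ‖v‖ := by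
  have h : RCLike.re (inner (𝕜 := ℂ) (r.conj v) (r.conj v))
      = RCLike.re (inner (𝕜 := ℂ) v v) := by
    rw [r.inner_conj]
    simp [RCLike.conj_re]
  rw [inner_self_eq_norm_mul_norm, inner_self_eq_norm_mul_norm] at h
  nlinarith [norm_nonneg (r.conj v), norm_nonneg v, norm_nonneg (r.conj v)]

end RealStructure

section PairConj

variable {A B : Type*} [NormedAddCommGroup A] [InnerProductSpace ℂ A]
  [NormedAddCommGroup B] [InnerProductSpace ℂ B] (rA : RealStructure A) (rB : RealStructure B)

theorem pairConj_add (x y : A × B) :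
    pairConj rA rB (x + y) = pairConj rA rB x + pairConj rA rB y := by
  simp only [pairConj, Prod.fst_add, Prod.snd_add, rA.map_add, rB.map_add, Prod.mk_add_mk]
  ext <;> simp <;> abel

theorem pairConj_invol (x : A × B) : pairConj rA rB (pairConj rA rB x) = x := by
  simp [pairConj, rA.invol, rB.map_neg', rB.invol]

theorem pairConj_norm (x : A × B) : ‖pairConj rA rB x‖ = ‖x‖ := by
  simp [pairConj, Prod.norm_def, rA.norm_conj, rB.norm_conj]

theorem pairInner_conj (x y : A × B) :
    pairInner (pairConj rA rB x) (pairConj rA rB y) = (starRingEnd ℂ) (pairInner x y) := by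
  simp [pairConj, pairInner, rA.inner_conj, rB.inner_conj, inner_neg_neg, map_add]

/-- `pairConj` as a homeomorphism. -/
def pairConjHomeo : (A × B) ≃ₜ (A × B) :=
  involHomeo (pairConj rA rB) (pairConj_add rA rB) (pairConj_invol rA rB) (pairConj_norm rA rB)

theorem IsLagrangianPair.isClosed' {rA : RealStructure A} {rB : RealStructure B}
    {L : Submodule ℂ (A × B)} (h : IsLagrangianPair rA rB L) : IsClosed (L : Set (A × B)) := by
  have hN : IsClosed {y : A × B | ∀ x ∈ L, pairInner x y = 0} := by
    have he : {y : A × B | ∀ x ∈ L, pairInner x y = 0}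
        = ⋂ x ∈ (L : Set (A × B)), {y | pairInner x y = 0} := by
      ext y; simp
    rw [he]
    refine isClosed_biInter fun x hx => ?_
    have hc : Continuous fun y : A × B => pairInner x y := by
      have h1 : Continuous fun y : A × B => (inner ℂ x.1 y.1 : ℂ) :=
        continuous_const.inner continuous_fst
      have h2 : Continuous fun y : A × B => (inner ℂ x.2 y.2 : ℂ) :=
        continuous_const.inner continuous_snd
      exact h1.add h2
    exact isClosed_eq hc continuous_const
  have himg : pairConj rA rB '' {y : A × B | ∀ x ∈ L, pairInner x y = 0} = (L : Set (A × B)) := by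
    rw [← h, ← Set.image_comp]
    have : (pairConj rA rB ∘ pairConj rA rB) = id := funext (pairConj_invol rA rB)
    rw [this, Set.image_id]
  rw [← himg]
  exact ((pairConjHomeo rA rB).isClosed_image).mpr hN

end PairConj
section ConjESection

variable (r₀ : RealStructure W₀) (r₁ : RealStructure W₁) (r₂ : RealStructure W₂)

theorem conjE_add (x y : (W₀ × W₁) × (W₁ × W₂)) :
    conjE r₀ r₁ r₂ (x + y) = conjE r₀ r₁ r₂ x + conjE r₀ r₁ r₂ y := by
  simp [conjE, pairConj_add, Prod.ext_iff]

theorem conjE_invol (x : (W₀ × W₁) × (W₁ × W₂)) :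
    conjE r₀ r₁ r₂ (conjE r₀ r₁ r₂ x) = x := by
  simp [conjE, pairConj_invol]

theorem conjE_norm (x : (W₀ × W₁) × (W₁ × W₂)) : ‖conjE r₀ r₁ r₂ x‖ = ‖x‖ := by
  simp [conjE, pairConj, Prod.norm_def, RealStructure.norm_conj, norm_neg]

theorem conjE_sub (x y : (W₀ × W₁) × (W₁ × W₂)) :
    conjE r₀ r₁ r₂ (x - y) = conjE r₀ r₁ r₂ x - conjE r₀ r₁ r₂ y := by
  have h0 : conjE r₀ r₁ r₂ 0 = 0 := by
    have := conjE_add r₀ r₁ r₂ 0 0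
    simpa using this.symm
  have hneg : ∀ z, conjE r₀ r₁ r₂ (-z) = - conjE r₀ r₁ r₂ z := by
    intro z
    have h := conjE_add r₀ r₁ r₂ z (-z)
    rw [add_neg_cancel, h0] at h
    exact eq_neg_of_add_eq_zero_right h.symm
  rw [sub_eq_add_neg, conjE_add, hneg, sub_eq_add_neg]

theorem innerE_conjE (x y : (W₀ × W₁) × (W₁ × W₂)) :
    innerE (conjE r₀ r₁ r₂ x) (conjE r₀ r₁ r₂ y) = (starRingEnd ℂ) (innerE x y) := by
  simp [conjE, innerE, pairInner_conj, map_add]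

/-- `conjE` as a homeomorphism. -/
def conjEHomeo : ((W₀ × W₁) × (W₁ × W₂)) ≃ₜ ((W₀ × W₁) × (W₁ × W₂)) :=
  involHomeo (conjE r₀ r₁ r₂) (conjE_add r₀ r₁ r₂) (conjE_invol r₀ r₁ r₂) (conjE_norm r₀ r₁ r₂)

theorem projSet_conj_subset (C S : Set ((W₀ × W₁) × (W₁ × W₂))) :
    conjE r₀ r₁ r₂ '' projSet C S
      ⊆ projSet (conjE r₀ r₁ r₂ '' C) (conjE r₀ r₁ r₂ '' S) := by
  rintro _ ⟨p, ⟨hpC, u, huS, horth⟩, rfl⟩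
  refine ⟨⟨p, hpC, rfl⟩, conjE r₀ r₁ r₂ u, ⟨u, huS, rfl⟩, ?_⟩
  rintro _ ⟨x, hxC, rfl⟩
  rw [← conjE_sub, innerE_conjE, horth x hxC, map_zero]

theorem projSet_conj_eq {C S C' S' : Set ((W₀ × W₁) × (W₁ × W₂))}
    (hC : conjE r₀ r₁ r₂ '' C = C') (hS : conjE r₀ r₁ r₂ '' S = S') :
    projSet C' S' = conjE r₀ r₁ r₂ '' projSet C S := by
  have hC' : conjE r₀ r₁ r₂ '' C' = C := by
    rw [← hC, ← Set.image_comp]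
    have : (conjE r₀ r₁ r₂ ∘ conjE r₀ r₁ r₂) = id := funext (conjE_invol r₀ r₁ r₂)
    rw [this, Set.image_id]
  have hS' : conjE r₀ r₁ r₂ '' S' = S := by
    rw [← hS, ← Set.image_comp]
    have : (conjE r₀ r₁ r₂ ∘ conjE r₀ r₁ r₂) = id := funext (conjE_invol r₀ r₁ r₂)
    rw [this, Set.image_id]
  apply Set.Subset.antisymm
  · intro p hp
    refine ⟨conjE r₀ r₁ r₂ p, ?_, conjE_invol r₀ r₁ r₂ p⟩
    have := projSet_conj_subset r₀ r₁ r₂ C' S' ⟨p, hp, rfl⟩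
    rwa [hC', hS'] at this
  · rw [← hC, ← hS]
    exact projSet_conj_subset r₀ r₁ r₂ C S

end ConjESection
section L2Setup

variable (W₀ W₁ W₂)

/-- The ambient space as a genuine Hilbert space (`L²` product). -/
local notation "EW" => WithLp 2 (WithLp 2 (W₀ × W₁) × WithLp 2 (W₁ × W₂))

/-- The identification of the `L²` product with the plain product. -/
def eE : WithLp 2 (WithLp 2 (W₀ × W₁) × WithLp 2 (W₁ × W₂)) ≃L[ℂ] (W₀ × W₁) × (W₁ × W₂) :=
  (WithLp.prodContinuousLinearEquiv 2 ℂ (WithLp 2 (W₀ × W₁)) (WithLp 2 (W₁ × W₂))).trans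
    ((WithLp.prodContinuousLinearEquiv 2 ℂ W₀ W₁).prodCongr
      (WithLp.prodContinuousLinearEquiv 2 ℂ W₁ W₂))

variable {W₀ W₁ W₂}

theorem innerE_eE (x y : EW) :
    innerE (eE W₀ W₁ W₂ x) (eE W₀ W₁ W₂ y) = (inner ℂ x y : ℂ) := rfl

/-- `σ` on the plain product. -/
def sigmaAmb : ((W₀ × W₁) × (W₁ × W₂)) →L[ℂ] W₁ :=
  (ContinuousLinearMap.snd ℂ W₀ W₁).comp (ContinuousLinearMap.fst ℂ (W₀ × W₁) (W₁ × W₂)) -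
    (ContinuousLinearMap.fst ℂ W₁ W₂).comp (ContinuousLinearMap.snd ℂ (W₀ × W₁) (W₁ × W₂))

theorem sigmaAmb_apply (x : (W₀ × W₁) × (W₁ × W₂)) : sigmaAmb x = x.1.2 - x.2.1 := rfl

/-- `δ̄ : w ↦ ((0, w), (−w, 0))` on the plain product. -/
def deltaAmb : W₁ →L[ℂ] ((W₀ × W₁) × (W₁ × W₂)) :=
  ((0 : W₁ →L[ℂ] W₀).prod (ContinuousLinearMap.id ℂ W₁)).prod
    ((-(ContinuousLinearMap.id ℂ W₁)).prod (0 : W₁ →L[ℂ] W₂))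

theorem deltaAmb_apply (w : W₁) :
    (deltaAmb w : (W₀ × W₁) × (W₁ × W₂)) = ((0, w), (-w, 0)) := rfl

variable (W₀ W₁ W₂)

/-- `σ` on the `L²` product. -/
def sigmaE : WithLp 2 (WithLp 2 (W₀ × W₁) × WithLp 2 (W₁ × W₂)) →L[ℂ] W₁ :=
  (sigmaAmb).comp (eE W₀ W₁ W₂ : EW →L[ℂ] (W₀ × W₁) × (W₁ × W₂))

/-- `δ̄` into the `L²` product. -/
def deltaE : W₁ →L[ℂ] WithLp 2 (WithLp 2 (W₀ × W₁) × WithLp 2 (W₁ × W₂)) :=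
  ((eE W₀ W₁ W₂).symm : ((W₀ × W₁) × (W₁ × W₂)) →L[ℂ] EW).comp deltaAmb

theorem adjoint_sigmaE :
    ContinuousLinearMap.adjoint (sigmaE W₀ W₁ W₂) = deltaE W₀ W₁ W₂ := by
  refine ((ContinuousLinearMap.eq_adjoint_iff (deltaE W₀ W₁ W₂) (sigmaE W₀ W₁ W₂)).mpr ?_).symm
  intro w y
  have h : (inner (𝕜 := ℂ) (deltaE W₀ W₁ W₂ w) y : ℂ)
      = innerE (deltaAmb w) (eE W₀ W₁ W₂ y) := by
    rw [← innerE_eE]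
    congr 1
  rw [h, deltaAmb_apply]
  show (inner ℂ (0 : W₀) (eE W₀ W₁ W₂ y).1.1 + inner ℂ w (eE W₀ W₁ W₂ y).1.2 : ℂ)
      + (inner ℂ (-w) (eE W₀ W₁ W₂ y).2.1 + inner ℂ (0 : W₂) (eE W₀ W₁ W₂ y).2.2)
      = inner ℂ w ((eE W₀ W₁ W₂ y).1.2 - (eE W₀ W₁ W₂ y).2.1)
  rw [inner_zero_left, inner_zero_left, inner_neg_left, inner_sub_right]
  ring

end L2Setup
set_option maxHeartbeats 1000000 in
/-- `σ|_L` has closed range if and only if `P_L(Ū)` and `P_{L̄}(U)` are closed. -/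
theorem sigma_closed_range_iff_projections_closed
    (r₀ : RealStructure W₀) (r₁ : RealStructure W₁) (r₂ : RealStructure W₂)
    (L01 : Submodule ℂ (W₀ × W₁)) (L12 : Submodule ℂ (W₁ × W₂))
    (h01 : IsLagrangianPair r₀ r₁ L01) (h12 : IsLagrangianPair r₁ r₂ L12) :
    let L : Set ((W₀ × W₁) × (W₁ × W₂)) := (L01.prod L12 : Set ((W₀ × W₁) × (W₁ × W₂)))
    let Lbar : Set ((W₀ × W₁) × (W₁ × W₂)) := conjE r₀ r₁ r₂ '' L
    let U : Set ((W₀ × W₁) × (W₁ × W₂)) := {x | ∃ w : W₁, x = ((0, w), (w, 0))}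
    let Ubar : Set ((W₀ × W₁) × (W₁ × W₂)) :=
      {x | ∃ w : W₁, x = ((0, -r₁.conj w), (r₁.conj w, 0))}
    -- σ restricted to L has closed range …
    IsClosed {w : W₁ | ∃ x ∈ L01, ∃ y ∈ L12, w = x.2 - y.1} ↔
    -- … iff P_L(Ū) and P_{L̄}(U) are both closed.
    (IsClosed (projSet L Ubar) ∧ IsClosed (projSet Lbar U)) := by
  intro L Lbar U Ubar
  classical
  have hL01 : IsClosed (L01 : Set (W₀ × W₁)) := h01.isClosed'
  have hL12 : IsClosed (L12 : Set (W₁ × W₂)) := h12.isClosed'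
  have hLclosed : IsClosed L := by
    have hLset : L = (L01 : Set (W₀ × W₁)) ×ˢ (L12 : Set (W₁ × W₂)) := by
      ext x
      simp [L, Set.mem_prod, Submodule.mem_prod]
    rw [hLset]
    exact hL01.prod hL12
  set e := eE W₀ W₁ W₂ with he
  set Lhat : Submodule ℂ (WithLp 2 (WithLp 2 (W₀ × W₁) × WithLp 2 (W₁ × W₂))) :=
    (L01.prod L12).comap ((e : WithLp 2 (WithLp 2 (W₀ × W₁) × WithLp 2 (W₁ × W₂)) →L[ℂ]
      (W₀ × W₁) × (W₁ × W₂)) : WithLp 2 (WithLp 2 (W₀ × W₁) × WithLp 2 (W₁ × W₂)) →ₗ[ℂ]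
      (W₀ × W₁) × (W₁ × W₂)) with hLhatdef
  have hmem : ∀ z, z ∈ Lhat ↔ e z ∈ L01.prod L12 := fun z => Iff.rfl
  have hLhatclosed : IsClosed (Lhat : Set (WithLp 2 (WithLp 2 (W₀ × W₁) × WithLp 2 (W₁ × W₂)))) := by
    have : (Lhat : Set (WithLp 2 (WithLp 2 (W₀ × W₁) × WithLp 2 (W₁ × W₂)))) = e ⁻¹' L := by
      ext z
      simp only [SetLike.mem_coe, hmem, Set.mem_preimage]
      exact Iff.rfl
    rw [this]
    exact hLclosed.preimage e.continuous
  haveI : CompleteSpace Lhat := hLhatclosed.completeSpace_coe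
  set A : Lhat →L[ℂ] W₁ := (sigmaE W₀ W₁ W₂).comp Lhat.subtypeL with hA
  have hAapp : ∀ z : Lhat, A z = (e (z : WithLp 2 (WithLp 2 (W₀ × W₁) × WithLp 2 (W₁ × W₂)))).1.2
      - (e (z : WithLp 2 (WithLp 2 (W₀ × W₁) × WithLp 2 (W₁ × W₂)))).2.1 := fun z => rfl
  have hrangeA : Set.range A = {w : W₁ | ∃ x ∈ L01, ∃ y ∈ L12, w = x.2 - y.1} := by
    ext w
    constructor
    · rintro ⟨⟨z, hz⟩, rfl⟩
      have hze : e z ∈ L01.prod L12 := hz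
      exact ⟨(e z).1, hze.1, (e z).2, hze.2, rfl⟩
    · rintro ⟨x, hx, y, hy, rfl⟩
      refine ⟨⟨e.symm (x, y), ?_⟩, ?_⟩
      · rw [hmem, e.apply_symm_apply]
        exact ⟨hx, hy⟩
      · rw [hAapp]
        simp [e.apply_symm_apply]
  have hAadj : (ContinuousLinearMap.adjoint (𝕜 := ℂ) (E := Lhat) (F := W₁) A : W₁ →L[ℂ] Lhat)
      = (Lhat.orthogonalProjectionOnto : WithLp 2 (WithLp 2 (W₀ × W₁) × WithLp 2 (W₁ × W₂)) →L[ℂ]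
          Lhat).comp (deltaE W₀ W₁ W₂) := by
    rw [hA, ContinuousLinearMap.adjoint_comp, Lhat.adjoint_subtypeL, adjoint_sigmaE]
  set T : W₁ →L[ℂ] Lhat := (ContinuousLinearMap.adjoint (𝕜 := ℂ) (E := Lhat) (F := W₁) A : W₁ →L[ℂ] Lhat) with hT
  have hTapp : ∀ v : W₁, ((T v : Lhat) : WithLp 2 (WithLp 2 (W₀ × W₁) × WithLp 2 (W₁ × W₂)))
      = ((Lhat.orthogonalProjectionOnto (deltaE W₀ W₁ W₂ v) : Lhat) :
          WithLp 2 (WithLp 2 (W₀ × W₁) × WithLp 2 (W₁ × W₂))) := by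
    intro v
    rw [hAadj]
    rfl
  have hdelta : ∀ v : W₁, e (deltaE W₀ W₁ W₂ v) = ((0, v), (-v, 0)) := by
    intro v
    show e ((e.symm) (deltaAmb v)) = _
    rw [e.apply_symm_apply, deltaAmb_apply]
  -- description of `projSet L Ubar`
  have hproj : projSet L Ubar
      = e '' ((Subtype.val : Lhat → WithLp 2 (WithLp 2 (W₀ × W₁) × WithLp 2 (W₁ × W₂))) ''
        Set.range T) := by
    ext p
    constructor
    · rintro ⟨hpL, u, ⟨w, rfl⟩, horth⟩
      set v : W₁ := -(r₁.conj w) with hv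
      have hu : ((0, -r₁.conj w), (r₁.conj w, 0)) = e (deltaE W₀ W₁ W₂ v) := by
        rw [hdelta, hv]
        simp
      have hp : e.symm p ∈ Lhat := by
        rw [hmem, e.apply_symm_apply]
        exact hpL
      have horth' : ∀ zh, zh ∈ Lhat →
          (inner (𝕜 := ℂ) (deltaE W₀ W₁ W₂ v - e.symm p) zh : ℂ) = 0 := by
        intro zh hzh
        have h1 : innerE (e (deltaE W₀ W₁ W₂ v - e.symm p)) (e zh) = 0 := by
          rw [map_sub, e.apply_symm_apply, ← hu]
          exact horth (e zh) hzh
        rwa [innerE_eE] at h1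
      have hop : ((Lhat.orthogonalProjectionOnto (deltaE W₀ W₁ W₂ v) : Lhat) :
          WithLp 2 (WithLp 2 (W₀ × W₁) × WithLp 2 (W₁ × W₂))) = e.symm p :=
        Submodule.eq_starProjection_of_mem_of_inner_eq_zero hp (fun zh hzh => horth' zh hzh)
      refine ⟨((T v : Lhat) : WithLp 2 (WithLp 2 (W₀ × W₁) × WithLp 2 (W₁ × W₂))),
        ⟨T v, ⟨v, rfl⟩, rfl⟩, ?_⟩
      rw [hTapp v, hop, e.apply_symm_apply]
    · rintro ⟨_, ⟨_, ⟨w, rfl⟩, rfl⟩, rfl⟩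
      constructor
      · exact (hmem _).1 (T w).2
      · refine ⟨e (deltaE W₀ W₁ W₂ w), ⟨r₁.conj (-w), ?_⟩, ?_⟩
        · rw [hdelta, r₁.invol]
          simp
        · intro x hx
          have hx' : e.symm x ∈ Lhat := by
            rw [hmem, e.apply_symm_apply]
            exact hx
          have key : deltaE W₀ W₁ W₂ w - ((T w : Lhat) :
              WithLp 2 (WithLp 2 (W₀ × W₁) × WithLp 2 (W₁ × W₂))) ∈ Lhatᗮ := by
            rw [hTapp]
            exact Submodule.sub_starProjection_mem_orthogonal (K := Lhat) _
          have h2 : (inner (𝕜 := ℂ) (deltaE W₀ W₁ W₂ w - ((T w : Lhat) :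
              WithLp 2 (WithLp 2 (W₀ × W₁) × WithLp 2 (W₁ × W₂)))) (e.symm x) : ℂ) = 0 := by
            rw [inner_eq_zero_symm]
            exact (Submodule.mem_orthogonal Lhat _).1 key (e.symm x) hx'
          have h3 : innerE (e (deltaE W₀ W₁ W₂ w - ((T w : Lhat) :
              WithLp 2 (WithLp 2 (W₀ × W₁) × WithLp 2 (W₁ × W₂))))) (e (e.symm x)) = 0 := by
            rw [innerE_eE]
            exact h2
          rw [map_sub, e.apply_symm_apply] at h3
          exact h3
  -- conjugation symmetry between the two projection sets
  have hconjU : conjE r₀ r₁ r₂ '' Ubar = U := by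
    ext x
    constructor
    · rintro ⟨_, ⟨w, rfl⟩, rfl⟩
      refine ⟨w, ?_⟩
      simp [conjE, pairConj, r₁.map_neg', r₁.invol, r₂.map_zero', r₀.map_zero']
    · rintro ⟨w, rfl⟩
      refine ⟨((0, -r₁.conj w), (r₁.conj w, 0)), ⟨w, rfl⟩, ?_⟩
      simp [conjE, pairConj, r₁.map_neg', r₁.invol, r₂.map_zero', r₀.map_zero']
  have hsymm : IsClosed (projSet Lbar U) ↔ IsClosed (projSet L Ubar) := by
    rw [projSet_conj_eq r₀ r₁ r₂ rfl hconjU]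
    exact (conjEHomeo r₀ r₁ r₂).isClosed_image
  -- the main chain of equivalences
  have hchain : IsClosed {w : W₁ | ∃ x ∈ L01, ∃ y ∈ L12, w = x.2 - y.1}
      ↔ IsClosed (projSet L Ubar) := by
    rw [← hrangeA, hproj]
    have h1 := isClosed_range_iff_isClosed_range_adjoint (E := Lhat) (F := W₁) A
    rw [← hT] at h1
    have h2 : IsClosed (Set.range T) ↔ IsClosed
        ((Subtype.val : Lhat → WithLp 2 (WithLp 2 (W₀ × W₁) × WithLp 2 (W₁ × W₂))) ''
          Set.range T) :=
      hLhatclosed.isClosedEmbedding_subtypeVal.isClosed_iff_image_isClosed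
    have h3 : IsClosed (e '' ((Subtype.val : Lhat →
        WithLp 2 (WithLp 2 (W₀ × W₁) × WithLp 2 (W₁ × W₂))) '' Set.range T)) ↔ IsClosed
        ((Subtype.val : Lhat → WithLp 2 (WithLp 2 (W₀ × W₁) × WithLp 2 (W₁ × W₂))) ''
          Set.range T) :=
      e.toHomeomorph.isClosed_image
    exact h1.trans (h2.trans h3.symm)
  constructor
  · intro h
    exact ⟨hchain.mp h, hsymm.mpr (hchain.mp h)⟩
  · intro h
    exact hchain.mpr h.1
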